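/- arXiv:math/0401242 — 6 statements merged into one kernel-verified Lean document; each statement's English description precedes it below -/
import Mathlib

section
/- Let A be a unital C*-algebra and let b be a positive full element of A (i.e., the closed two-sided ideal generated by b equals A). If there exist x, y in A with x·b·y = 1, then there exists z in A with z*·b·z = 1. -/
open scoped ENNReal MultiplierAlgebra

/-- An element `b` of a topological ring is *full* if the closure of the two-sided ideal
it generates is the whole ring. -/
def IsFullIn {A : Type*} [NonUnitalNonAssocRing A] [TopologicalSpace A] (b : A) : Prop :=
  closure ((TwoSidedIdeal.span {b} : TwoSidedIdeal A) : Set A) = Set.univ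

/-- Property (P1): every full element `b` admits `x, y` with `x * b * y = 1`. -/
def PropP1 (B : Type*) [Ring B] [TopologicalSpace B] : Prop :=
  ∀ b : B, IsFullIn b → ∃ x y : B, x * b * y = 1

/-- The piecewise-linear function `f_n` : `0` on `[0, 1/(n+1)]`, `1` on `[1/n, ∞)`,
linear in between. -/
noncomputable def fcut (n : ℕ) (t : ℝ) : ℝ := min 1 (max 0 ((n * (n + 1) : ℝ) * t - n))

/-- if `b ≥ 0` is full and `x * b * y = 1` for some `x, y`, then
`star z * b * z = 1` for some `z`. -/
theorem stmt0 {A : Type*} [CStarAlgebra A] [PartialOrder A] [StarOrderedRing A]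
    (b : A) (hb : 0 ≤ b) (hfull : IsFullIn b)
    (x y : A) (hxy : x * b * y = 1) :
    ∃ z : A, star z * b * z = 1 := by
  by_cases htriv : (1 : A) = 0
  · exact ⟨0, by simpa using htriv.symm⟩
  set s := CFC.sqrt b with hs_def
  have hs : 0 ≤ s := CFC.sqrt_nonneg b
  have hss : s * s = b := CFC.sqrt_mul_sqrt_self b hb
  have hsa : star s = s := (IsSelfAdjoint.of_nonneg hs).star_eq
  set u := x * s with hu_def
  set a := s * y with ha_def
  have hua : u * a = 1 := by
    rw [hu_def, ha_def, mul_assoc x s, ← mul_assoc s s, hss, ← mul_assoc, hxy]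
  set c := star a * a with hc_def
  have hc : 0 ≤ c := star_mul_self_nonneg a
  have hcy : c = star y * b * y := by
    rw [hc_def, ha_def, star_mul, hsa, mul_assoc, ← mul_assoc s s y, hss, ← mul_assoc]
  have hune : u ≠ 0 := by
    intro h
    apply htriv
    rw [← hua, h, zero_mul]
  have hr : (0 : ℝ) < ‖u‖ ^ 2 := pow_pos (norm_pos_iff.mpr hune) 2
  have h1 : (1 : A) ≤ ‖u‖ ^ 2 • c := by
    have e1 : star a * (star u * u) * a = 1 := by
      have := congrArg (fun t => star t * t) hua
      simpa [star_mul, mul_assoc] using this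
    calc (1 : A) = star a * (star u * u) * a := e1.symm
      _ ≤ star a * algebraMap ℝ A (‖u‖ ^ 2) * a :=
          star_left_conjugate_le_conjugate CStarAlgebra.star_mul_le_algebraMap_norm_sq a
      _ = ‖u‖ ^ 2 • c := by
          rw [Algebra.algebraMap_eq_smul_one, hc_def]
          rw [mul_smul_comm, mul_one, smul_mul_assoc]
  have h2 : (‖u‖ ^ 2)⁻¹ • (1 : A) ≤ c := by
    have := smul_le_smul_of_nonneg_left h1 (inv_nonneg.mpr hr.le)
    rwa [inv_smul_smul₀ hr.ne'] at this
  have h2nonneg : (0 : A) ≤ (‖u‖ ^ 2)⁻¹ • (1 : A) :=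
    smul_nonneg (inv_nonneg.mpr hr.le) zero_le_one
  have h2unit : IsUnit ((‖u‖ ^ 2)⁻¹ • (1 : A)) := by
    rw [← Algebra.algebraMap_eq_smul_one]
    exact (isUnit_iff_ne_zero.mpr (inv_ne_zero hr.ne')).map (algebraMap ℝ A)
  have hcu : IsUnit c := CStarAlgebra.isUnit_of_le _ h2 (h2unit.isStrictlyPositive h2nonneg)
  obtain ⟨C, hC⟩ := hcu
  have hCnn : 0 ≤ (C : A) := hC.symm ▸ hc
  have hCinv : (0 : A) ≤ ((C⁻¹ : Aˣ) : A) := CFC.inv_nonneg_of_nonneg C hCnn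
  set d := CFC.sqrt ((C⁻¹ : Aˣ) : A) with hd_def
  have hd : 0 ≤ d := CFC.sqrt_nonneg _
  have hda : star d = d := (IsSelfAdjoint.of_nonneg hd).star_eq
  have hdd : d * d = ((C⁻¹ : Aˣ) : A) := CFC.sqrt_mul_sqrt_self _ hCinv
  have hd_left : d * (d * c) = 1 := by
    rw [← mul_assoc, hdd, ← hC, C.inv_mul]
  have hd_right : c * d * d = 1 := by
    rw [mul_assoc, hdd, ← hC, C.mul_inv]
  have hcomm : c * d = d * c := by
    calc c * d = c * d * (d * (d * c)) := by rw [hd_left, mul_one]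
      _ = (c * d * d) * (d * c) := by rw [← mul_assoc]
      _ = d * c := by rw [hd_right, one_mul]
  refine ⟨y * d, ?_⟩
  calc star (y * d) * b * (y * d)
      = d * (star y * b * y) * d := by
        rw [star_mul, hda]
        simp only [mul_assoc]
    _ = d * (c * d) := by rw [← hcy, mul_assoc]
    _ = 1 := by rw [hcomm, hd_left]
end

section
/- Let B be a unital C*-algebra with property (P1) (for every full element b of B there exist x, y ∈ B with x·b·y = 1). If B contains two mutually orthogonal full positive elements a, b with 0 ≤ a, b ≤ 1 and ab = 0, then B has property (P2): there exist isometries v₁, v₂ ∈ B (v₁*v₁ = v₂*v₂ = 1) whose range projections v₁v₁* and v₂v₂* are mutually orthogonal. -/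
open scoped ENNReal MultiplierAlgebra

section aux
variable {B : Type*} [CStarAlgebra B] [PartialOrder B] [StarOrderedRing B]

/-- Multiplication by a nonnegative real scalar (as `algebraMap`) preserves order. -/
lemma algMul_le_algMul {p q : B} (hpq : p ≤ q) {r : ℝ} (hr : 0 ≤ r) :
    algebraMap ℝ B r * p ≤ algebraMap ℝ B r * q := by
  set t := Real.sqrt r with ht
  have htt : algebraMap ℝ B r = algebraMap ℝ B t * algebraMap ℝ B t := by
    rw [← map_mul, Real.mul_self_sqrt hr]
  have hstar : star (algebraMap ℝ B t) = algebraMap ℝ B t := by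
    rw [← algebraMap_star_comm, star_trivial]
  have hcomm : ∀ w : B, algebraMap ℝ B t * w = w * algebraMap ℝ B t := fun w ↦
    Algebra.commutes t w
  have key : ∀ w : B, 0 ≤ w → 0 ≤ algebraMap ℝ B r * w := by
    intro w hw
    have := star_left_conjugate_le_conjugate hw (algebraMap ℝ B t)
    simp only [mul_zero, zero_mul, hstar] at this
    calc (0 : B) ≤ algebraMap ℝ B t * w * algebraMap ℝ B t := this
      _ = algebraMap ℝ B r * w := by rw [mul_assoc, ← hcomm w, ← mul_assoc, ← htt]
  have := key (q - p) (sub_nonneg.mpr hpq)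
  rw [mul_sub] at this
  exact sub_nonneg.mp this
end aux

section aux2
variable {B : Type*} [CStarAlgebra B] [PartialOrder B] [StarOrderedRing B]

lemma exists_conj_eq_one [Nontrivial B] (hP1 : PropP1 B) (a : B) (ha0 : 0 ≤ a) (ha1 : a ≤ 1)
    (hfull : IsFullIn a) : ∃ z : B, star z * a * z = 1 := by
  obtain ⟨x, y, hxy⟩ := hP1 a hfull
  have hsa : star a = a := (IsSelfAdjoint.of_nonneg ha0).star_eq
  set d := star y * a * y with hd
  have hd0 : 0 ≤ d := star_left_conjugate_nonneg ha0 y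
  set r : ℝ := ‖x‖ ^ 2 with hr
  -- step 1 : 1 = star (a*y) * (star x * x) * (a*y)
  have h1 : star (a * y) * (star x * x) * (a * y) = 1 := by
    have h := congrArg (fun w => star w * w) hxy
    simpa [star_mul, hsa, mul_assoc] using h
  have h2 : (1 : B) ≤ star (a * y) * algebraMap ℝ B r * (a * y) := by
    rw [← h1]
    exact star_left_conjugate_le_conjugate CStarAlgebra.star_mul_le_algebraMap_norm_sq _
  have h3 : star (a * y) * algebraMap ℝ B r * (a * y)
      = algebraMap ℝ B r * (star y * (a * a) * y) := by
    rw [star_mul, hsa, ← Algebra.commutes r (star y * a)]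
    simp [mul_assoc]
  have haa : a * a ≤ a := by
    have hs_nonneg : (0 : B) ≤ CFC.sqrt a := CFC.sqrt_nonneg _
    set s := CFC.sqrt a with hs_def
    have hs : s * s = a := CFC.sqrt_mul_sqrt_self a ha0
    have e1 : s * a * s = a * a := by rw [← hs]; noncomm_ring
    have h' := conjugate_le_conjugate_of_nonneg ha1 hs_nonneg
    rw [e1, mul_one, hs] at h'
    exact h'
  have h4 : star y * (a * a) * y ≤ d := star_left_conjugate_le_conjugate haa y
  have h5 : (1 : B) ≤ algebraMap ℝ B r * d := by
    calc (1 : B) ≤ star (a * y) * algebraMap ℝ B r * (a * y) := h2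
      _ = algebraMap ℝ B r * (star y * (a * a) * y) := h3
      _ ≤ algebraMap ℝ B r * d := algMul_le_algMul h4 (by positivity)
  have hru : r ≠ 0 := by
    intro h0
    rw [h0] at h5
    simp at h5
    exact zero_ne_one (le_antisymm zero_le_one h5)
  have hE : IsUnit (algebraMap ℝ B r * d) :=
    CStarAlgebra.isUnit_of_le 1 h5
  have hdu : IsUnit d := by
    have hsm : (Units.mk0 r hru) • d = algebraMap ℝ B r * d := by
      rw [Units.smul_def, Units.val_mk0, Algebra.smul_def]
    exact (isUnit_smul_iff (Units.mk0 r hru) d).mp (hsm ▸ hE)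
  refine ⟨y * d ^ (-(1 / 2) : ℝ), ?_⟩
  have hrs : star (d ^ (-(1 / 2) : ℝ)) = d ^ (-(1 / 2) : ℝ) :=
    (IsSelfAdjoint.of_nonneg CFC.rpow_nonneg).star_eq
  have hkey := CFC.conjugate_rpow_neg_one_half (a := d) (hdu.isStrictlyPositive hd0)
  calc star (y * d ^ (-(1 / 2) : ℝ)) * a * (y * d ^ (-(1 / 2) : ℝ))
      = d ^ (-(1 / 2) : ℝ) * (star y * a * y) * d ^ (-(1 / 2) : ℝ) := by
        rw [star_mul, hrs]; simp [mul_assoc]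
    _ = 1 := by rw [← hd, hkey]

end aux2


/-- a unital C*-algebra with (P1) containing two mutually orthogonal full
positive contractions has (P2): two isometries with mutually orthogonal range projections. -/
theorem stmt1 {B : Type*} [CStarAlgebra B] [PartialOrder B] [StarOrderedRing B]
    (hP1 : PropP1 B)
    (a b : B) (ha0 : 0 ≤ a) (ha1 : a ≤ 1) (hb0 : 0 ≤ b) (hb1 : b ≤ 1)
    (hab : a * b = 0) (hafull : IsFullIn a) (hbfull : IsFullIn b) :
    ∃ v₁ v₂ : B, star v₁ * v₁ = 1 ∧ star v₂ * v₂ = 1 ∧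
      (v₁ * star v₁) * (v₂ * star v₂) = 0 := by
  rcases subsingleton_or_nontrivial B with hs | hn
  · exact ⟨1, 1, Subsingleton.elim _ _, Subsingleton.elim _ _, Subsingleton.elim _ _⟩
  obtain ⟨z₁, hz₁⟩ := exists_conj_eq_one hP1 a ha0 ha1 hafull
  obtain ⟨z₂, hz₂⟩ := exists_conj_eq_one hP1 b hb0 hb1 hbfull
  set sa := CFC.sqrt a with hsa_def
  set sb := CFC.sqrt b with hsb_def
  have hsa0 : (0 : B) ≤ sa := CFC.sqrt_nonneg _
  have hsb0 : (0 : B) ≤ sb := CFC.sqrt_nonneg _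
  have hsaa : sa * sa = a := CFC.sqrt_mul_sqrt_self a ha0
  have hsbb : sb * sb = b := CFC.sqrt_mul_sqrt_self b hb0
  have hsa_star : star sa = sa := (IsSelfAdjoint.of_nonneg hsa0).star_eq
  have hsb_star : star sb = sb := (IsSelfAdjoint.of_nonneg hsb0).star_eq
  have hb_star : star b = b := (IsSelfAdjoint.of_nonneg hb0).star_eq
  -- sa * b = 0
  have hsab : sa * b = 0 := by
    rw [← CStarRing.star_mul_self_eq_zero_iff (sa * b)]
    calc star (sa * b) * (sa * b) = b * (sa * sa) * b := by
          rw [star_mul, hb_star, hsa_star]; noncomm_ring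
      _ = 0 := by
          have ha_star : star a = a := (IsSelfAdjoint.of_nonneg ha0).star_eq
          have hba : b * a = 0 := by
            simpa [star_mul, hb_star, ha_star] using congrArg star hab
          rw [hsaa, hba, zero_mul]
  -- sb * sa = 0 and sa * sb = 0
  have hsbsa : sb * sa = 0 := by
    rw [← CStarRing.star_mul_self_eq_zero_iff (sb * sa)]
    calc star (sb * sa) * (sb * sa) = sa * (sb * sb) * sa := by
          rw [star_mul, hsa_star, hsb_star]; noncomm_ring
      _ = sa * b * sa := by rw [hsbb]
      _ = 0 := by rw [hsab, zero_mul]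
  have hsasb : sa * sb = 0 := by
    have := congrArg star hsbsa
    simpa [star_mul, hsa_star, hsb_star] using this
  refine ⟨sa * z₁, sb * z₂, ?_, ?_, ?_⟩
  · calc star (sa * z₁) * (sa * z₁) = star z₁ * (sa * sa) * z₁ := by
          rw [star_mul, hsa_star]; noncomm_ring
      _ = 1 := by rw [hsaa]; exact hz₁
  · calc star (sb * z₂) * (sb * z₂) = star z₂ * (sb * sb) * z₂ := by
          rw [star_mul, hsb_star]; noncomm_ring
      _ = 1 := by rw [hsbb]; exact hz₂
  · calc (sa * z₁ * star (sa * z₁)) * (sb * z₂ * star (sb * z₂))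
        = sa * z₁ * star z₁ * ((sa * sb) * (z₂ * star z₂ * sb)) := by
          rw [star_mul, star_mul, hsa_star, hsb_star]; noncomm_ring
      _ = 0 := by rw [hsasb, zero_mul, mul_zero]
end

section
/- Let A be a unital C*-algebra and I a σ-unital closed two-sided ideal of A, with quotient map π : A → A/I. If a ∈ (A/I)₊ is a full element of A/I, then there exists a full positive element b ∈ A₊ with π(b) = a. -/
open scoped ENNReal MultiplierAlgebra

/-! ### Auxiliary function lemmas -/

noncomputable def hcut (n : ℕ) (t : ℝ) : ℝ := fcut n t / t

lemma fcut_eq_zero {n : ℕ} {t : ℝ} (ht : t ≤ 1 / (n + 1)) : fcut n t = 0 := by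
  have h0 : (0:ℝ) < (n:ℝ) + 1 := by positivity
  have h1 : (n * (n + 1) : ℝ) * t - n ≤ 0 := by
    have := mul_le_mul_of_nonneg_left ht (show (0:ℝ) ≤ (n:ℝ) * (n + 1) by positivity)
    rw [mul_one_div, mul_div_assoc] at this
    rw [div_self h0.ne', mul_one] at this
    linarith
  unfold fcut
  rw [max_eq_left h1, min_eq_right zero_le_one]

lemma fcut_nonneg (n : ℕ) (t : ℝ) : 0 ≤ fcut n t :=
  le_min zero_le_one (le_max_left _ _)

lemma fcut_le_one (n : ℕ) (t : ℝ) : fcut n t ≤ 1 := min_le_left _ _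

lemma fcut_eq_one {n : ℕ} {t : ℝ} (hn : 1 ≤ n) (ht : 1 / n ≤ t) : fcut n t = 1 := by
  have h0 : (0:ℝ) < (n:ℝ) := by exact_mod_cast hn
  have h1 : (1:ℝ) ≤ (n * (n + 1) : ℝ) * t - n := by
    have := mul_le_mul_of_nonneg_left ht (show (0:ℝ) ≤ (n:ℝ) * (n + 1) by positivity)
    rw [mul_one_div] at this
    rw [show (n:ℝ) * (n+1) / n = ((n:ℝ) * (n+1)) / n from rfl] at this
    have h2 : ((n:ℝ) * (n + 1)) / n = (n:ℝ) + 1 := by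
      field_simp
    rw [h2] at this
    linarith
  unfold fcut
  rw [max_eq_right (by linarith), min_eq_left h1]

lemma continuous_fcut (n : ℕ) : Continuous (fcut n) := by
  unfold fcut; fun_prop

lemma continuous_hcut (n : ℕ) : Continuous (hcut n) := by
  rw [continuous_iff_continuousAt]
  intro t
  by_cases ht : t = 0
  · subst ht
    have hev : hcut n =ᶠ[nhds (0:ℝ)] fun _ => (0:ℝ) := by
      filter_upwards [Iio_mem_nhds (show (0:ℝ) < 1 / (n + 1) by positivity)] with s hs
      have : fcut n s = 0 := fcut_eq_zero (le_of_lt hs)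
      simp [hcut, this]
    exact ContinuousAt.congr continuousAt_const hev.symm
  · exact ((continuous_fcut n).continuousAt).div continuousAt_id ht

lemma t_mul_hcut (n : ℕ) (t : ℝ) : t * hcut n t = fcut n t := by
  by_cases ht : t = 0
  · subst ht
    rw [zero_mul, fcut_eq_zero (by positivity)]
  · rw [hcut, mul_comm, div_mul_cancel₀ _ ht]

/-! ### Hereditary-type lemma: `0 ≤ e ≤ b` implies `e` lies in the closed ideal
generated by `b`. -/

lemma mem_closure_span_of_le {A : Type*} [CStarAlgebra A] [PartialOrder A] [StarOrderedRing A]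
    {e b : A} (he : 0 ≤ e) (heb : e ≤ b) :
    e ∈ closure ((TwoSidedIdeal.span {b} : TwoSidedIdeal A) : Set A) := by
  have hb : 0 ≤ b := he.trans heb
  set S : Set A := ((TwoSidedIdeal.span {b} : TwoSidedIdeal A) : Set A) with hS
  set r := CFC.sqrt e with hrdef
  have hr0 : 0 ≤ r := CFC.sqrt_nonneg (a := e)
  have hrr : r * r = e := CFC.sqrt_mul_sqrt_self e he
  have hrsa : star r = r := (IsSelfAdjoint.of_nonneg hr0).star_eq
  rw [Metric.mem_closure_iff]
  intro ε hε
  set M : ℝ := ‖r‖ + 1 with hM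
  have hM0 : 0 < M := by positivity
  obtain ⟨n, hn⟩ := exists_nat_one_div_lt (show 0 < (ε / M)^2 by positivity)
  set N := n + 1 with hN
  have hN1 : 1 ≤ N := Nat.le_add_left 1 n
  have hNR : (0:ℝ) < N := by exact_mod_cast hN1
  have hnn : 1 / (N:ℝ) < (ε / M)^2 := by
    convert hn using 2
    · rfl
    · simp [hN]
  set g := cfc (fcut N) b with hgdef
  have hbsa : IsSelfAdjoint b := IsSelfAdjoint.of_nonneg hb
  have hgS : g ∈ S := by
    have hgb : g = b * cfc (hcut N) b := by
      have h9 : cfc (fun t : ℝ => t * hcut N t) b = b * cfc (hcut N) b := by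
        rw [cfc_mul (fun t : ℝ => t) (hcut N) b continuousOn_id
          ((continuous_hcut N).continuousOn), cfc_id' ℝ b hbsa]
      rw [hgdef, show fcut N = fun t => t * hcut N t from
        funext fun t => (t_mul_hcut N t).symm, h9]
    rw [hgb]
    exact TwoSidedIdeal.mul_mem_right _ _ _ (TwoSidedIdeal.subset_span rfl)
  have hgsa : IsSelfAdjoint g := cfc_predicate (fcut N) b
  have hogsa : star (1 - g) = 1 - g := ((IsSelfAdjoint.one (R := A)).sub hgsa).star_eq
  refine ⟨r * g * r, TwoSidedIdeal.mul_mem_right _ _ _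
    (TwoSidedIdeal.mul_mem_left _ _ _ hgS), ?_⟩
  rw [dist_eq_norm]
  have key : e - r * g * r = r * ((1 - g) * r) := by
    rw [← hrr]; noncomm_ring
  set x := (1 - g) * r with hx
  have hxx : x * star x = (1 - g) * e * (1 - g) := by
    rw [hx, star_mul, hrsa, hogsa, ← hrr]
    noncomm_ring
  have h2 : (1 - g) * e * (1 - g) ≤ (1 - g) * b * (1 - g) := by
    have := star_left_conjugate_le_conjugate heb (1 - g)
    rwa [hogsa] at this
  have h3 : 0 ≤ (1 - g) * e * (1 - g) := by
    have := star_left_conjugate_nonneg he (1 - g)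
    rwa [hogsa] at this
  have h4 : ‖(1 - g) * e * (1 - g)‖ ≤ ‖(1 - g) * b * (1 - g)‖ :=
    CStarAlgebra.norm_le_norm_of_nonneg_of_le h3 h2
  have hco : ContinuousOn (fun t : ℝ => 1 - fcut N t) (spectrum ℝ b) :=
    (continuous_const.sub (continuous_fcut N)).continuousOn
  have e1 : (1 : A) - g = cfc (fun t : ℝ => 1 - fcut N t) b := by
    rw [cfc_sub (fun _ : ℝ => (1:ℝ)) (fcut N) b continuousOn_const
      ((continuous_fcut N).continuousOn), cfc_const_one ℝ b]
  have h5 : cfc (fun t : ℝ => (1 - fcut N t) * t * (1 - fcut N t)) b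
      = (1 - g) * b * (1 - g) := by
    rw [cfc_mul (fun t : ℝ => (1 - fcut N t) * t) (fun t : ℝ => 1 - fcut N t) b
        (((continuous_const.sub (continuous_fcut N)).mul continuous_id).continuousOn) hco,
      cfc_mul (fun t : ℝ => 1 - fcut N t) (fun t : ℝ => t) b hco
        continuousOn_id,
      cfc_id' ℝ b hbsa, ← e1]
  have h6 : ‖(1 - g) * b * (1 - g)‖ ≤ 1 / N := by
    rw [← h5]
    refine norm_cfc_le (by positivity) fun t ht => ?_
    have ht0 : 0 ≤ t := spectrum_nonneg_of_nonneg hb ht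
    rcases le_or_gt t (1 / N) with h | h
    · have hf0 := fcut_nonneg N t
      have hf1 := fcut_le_one N t
      have h10 : 0 ≤ 1 - fcut N t := by linarith
      have h11 : 0 ≤ (1 - fcut N t) * t * (1 - fcut N t) :=
        mul_nonneg (mul_nonneg h10 ht0) h10
      have h12 : (1 - fcut N t) * t * (1 - fcut N t) ≤ t := by
        nlinarith [mul_nonneg (mul_nonneg ht0 hf0) (show 0 ≤ 2 - fcut N t by linarith)]
      rw [Real.norm_eq_abs, abs_of_nonneg h11]
      linarith
    · rw [fcut_eq_one hN1 h.le]
      simp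
  have hxnorm : ‖x‖ * ‖x‖ ≤ 1 / N := by
    calc ‖x‖ * ‖x‖ = ‖x * star x‖ := (CStarRing.norm_self_mul_star).symm
      _ = ‖(1 - g) * e * (1 - g)‖ := by rw [hxx]
      _ ≤ ‖(1 - g) * b * (1 - g)‖ := h4
      _ ≤ 1 / N := h6
  have hxlt : ‖x‖ < ε / M := by
    nlinarith [norm_nonneg x, div_pos hε hM0]
  calc ‖e - r * g * r‖ = ‖r * x‖ := by rw [key]
    _ ≤ ‖r‖ * ‖x‖ := norm_mul_le _ _
    _ < ε := by
        have h7 : ‖r‖ < M := by rw [hM]; linarith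
        have h8 : 0 ≤ ‖x‖ := norm_nonneg x
        nlinarith [norm_nonneg r, div_pos hε hM0,
          (div_mul_cancel₀ ε hM0.ne' : ε / M * M = ε)]

/-- a full positive element of the quotient `A/I` (modelled by a surjective
star homomorphism `π : A → Q` with kernel the σ-unital closed two-sided ideal `I`) lifts
to a full positive element of `A`. -/
theorem stmt2 {A Q : Type*} [CStarAlgebra A] [PartialOrder A] [StarOrderedRing A]
    [CStarAlgebra Q] [PartialOrder Q] [StarOrderedRing Q]
    (I : TwoSidedIdeal A) (hclosed : IsClosed (I : Set A))
    -- σ-unitality of I : a strictly positive element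
    (hσ : ∃ e : A, e ∈ I ∧ 0 ≤ e ∧ closure {x | ∃ y ∈ I, x = e * y * e} = (I : Set A))
    (π : A →⋆ₐ[ℂ] Q) (hsurj : Function.Surjective π)
    (hker : ∀ x : A, π x = 0 ↔ x ∈ I)
    (a : Q) (ha : 0 ≤ a) (hafull : IsFullIn a) :
    ∃ b : A, 0 ≤ b ∧ IsFullIn b ∧ π b = a := by
  obtain ⟨e, heI, he0, heclos⟩ := hσ
  -- a positive lift `c` of `a`
  obtain ⟨t, ht⟩ := hsurj (CFC.sqrt a)
  set c : A := star t * t with hc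
  have hc0 : 0 ≤ c := star_mul_self_nonneg t
  have hπc : π c = a := by
    have hs0 : 0 ≤ CFC.sqrt a := CFC.sqrt_nonneg (a := a)
    have : π c = star (π t) * π t := by rw [hc, map_mul, map_star]
    rw [this, ht, (IsSelfAdjoint.of_nonneg hs0).star_eq, CFC.sqrt_mul_sqrt_self a ha]
  set b : A := c + e with hb
  have hb0 : 0 ≤ b := add_nonneg hc0 he0
  have heb : e ≤ b := le_add_of_nonneg_left hc0
  have hπb : π b = a := by
    have hπe : π e = 0 := (hker e).mpr heI
    rw [hb, map_add, hπe, add_zero, hπc]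
  refine ⟨b, hb0, ?_, hπb⟩
  -- Fullness
  set S : Set A := ((TwoSidedIdeal.span {b} : TwoSidedIdeal A) : Set A) with hSdef
  set J : Set A := closure S with hJdef
  -- e lies in J (hereditarity)
  have heJ : e ∈ J := mem_closure_span_of_le he0 heb
  -- I ⊆ J
  have hIJ : (I : Set A) ⊆ J := by
    rw [← heclos]
    refine closure_minimal ?_ isClosed_closure
    rintro x ⟨y, hy, rfl⟩
    have hcont : Continuous fun z : A => z * (y * e) := continuous_mul_right _
    have : e * (y * e) ∈ closure S :=
      map_mem_closure (f := fun z : A => z * (y * e)) hcont heJ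
        fun z hz => TwoSidedIdeal.mul_mem_right _ _ _ hz
    rwa [← mul_assoc] at this
  -- J is closed under addition
  have hJadd : ∀ x ∈ J, ∀ y ∈ J, x + y ∈ J := fun x hx y hy =>
    map_mem_closure₂ continuous_add hx hy fun p hp q hq => TwoSidedIdeal.add_mem _ hp hq
  -- π as a continuous linear map
  have hcontπ : Continuous π :=
    AddMonoidHomClass.continuous_of_bound π 1 fun z => by
      simpa using NonUnitalStarAlgHom.norm_apply_le π z
  set L : A →L[ℂ] Q := ⟨π.toAlgHom.toLinearMap, hcontπ⟩ with hL
  have hLopen : IsOpenMap L := L.isOpenMap (by exact hsurj)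
  -- the image of the span of {b} is a two-sided ideal of Q
  set T : TwoSidedIdeal Q := TwoSidedIdeal.mk' (π '' S)
    ⟨0, TwoSidedIdeal.zero_mem _, map_zero π⟩
    (by rintro x y ⟨p, hp, rfl⟩ ⟨q, hq, rfl⟩
        exact ⟨p + q, TwoSidedIdeal.add_mem _ hp hq, map_add π p q⟩)
    (by rintro x ⟨p, hp, rfl⟩
        exact ⟨-p, TwoSidedIdeal.neg_mem _ hp, map_neg π p⟩)
    (by rintro x y ⟨p, hp, rfl⟩
        obtain ⟨w, hw⟩ := hsurj x
        exact ⟨w * p, TwoSidedIdeal.mul_mem_left _ _ _ hp, by rw [map_mul, hw]⟩)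
    (by rintro x y ⟨p, hp, rfl⟩
        obtain ⟨w, hw⟩ := hsurj y
        exact ⟨p * w, TwoSidedIdeal.mul_mem_right _ _ _ hp, by rw [map_mul, hw]⟩)
    with hT
  have hspan_sub : ((TwoSidedIdeal.span {a} : TwoSidedIdeal Q) : Set Q) ⊆ π '' S := by
    intro x hx
    have := TwoSidedIdeal.mem_span_iff.mp hx T ?_
    · rw [hT] at this; exact (TwoSidedIdeal.mem_mk' _ _ _ _ _ _ _).mp this
    · intro q hq
      rw [Set.mem_singleton_iff] at hq
      subst hq
      rw [hT, SetLike.mem_coe]; refine (TwoSidedIdeal.mem_mk' _ _ _ _ _ _ _).mpr ?_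
      exact ⟨b, TwoSidedIdeal.subset_span rfl, hπb⟩
  -- preimage of image is contained in J
  have hpre : π ⁻¹' (π '' S) ⊆ J := by
    rintro x ⟨z, hz, hzx⟩
    have hxz : x - z ∈ (I : Set A) := by
      rw [SetLike.mem_coe, ← hker]
      rw [map_sub, hzx, sub_self]
    have : z + (x - z) ∈ J :=
      hJadd z (subset_closure hz) _ (hIJ hxz)
    simpa using this
  -- conclude via the open mapping theorem
  unfold IsFullIn
  unfold IsFullIn at hafull
  refine Set.eq_univ_of_univ_subset ?_
  have step1 : (Set.univ : Set A) ⊆ π ⁻¹' (closure (π '' S)) := by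
    intro x _
    have : π x ∈ closure ((TwoSidedIdeal.span {a} : TwoSidedIdeal Q) : Set Q) := by
      rw [hafull]; trivial
    exact closure_mono hspan_sub this
  have step2 : π ⁻¹' (closure (π '' S)) ⊆ closure (π ⁻¹' (π '' S)) :=
    hLopen.preimage_closure_subset_closure_preimage
  have step3 : closure (π ⁻¹' (π '' S)) ⊆ J :=
    closure_minimal hpre isClosed_closure
  exact fun x hx => step3 (step2 (step1 hx))
end

section
/- Let B be a C*-algebra, A ⊆ B a C*-subalgebra, a ∈ A₊, and let C = cl(a B a) be the hereditary C*-subalgebra of B generated by a. Then for any approximate identity (eₙ) of A, one has ‖eₙ b − b‖ → 0 and ‖b eₙ − b‖ → 0 for every b ∈ C. -/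
open scoped ENNReal MultiplierAlgebra

open Filter Topology


lemma auxL {B : Type*} [NonUnitalNormedRing B] (e : ℕ → B) (he1 : ∀ n, ‖e n‖ ≤ 1)
    (S : Set B) (h : ∀ b ∈ S, Tendsto (fun n => ‖e n * b - b‖) atTop (nhds 0)) :
    ∀ b ∈ closure S, Tendsto (fun n => ‖e n * b - b‖) atTop (nhds 0) := by
  intro b hb
  rw [Metric.tendsto_atTop]
  intro ε hε
  obtain ⟨b', hb'S, hbb'⟩ := Metric.mem_closure_iff.mp hb (ε/4) (by linarith)
  obtain ⟨N, hN⟩ := Metric.tendsto_atTop.mp (h b' hb'S) (ε/4) (by linarith)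
  refine ⟨N, fun n hn => ?_⟩
  have key : e n * b - b = e n * (b - b') + (e n * b' - b') + (b' - b) := by
    rw [mul_sub]; abel
  have hb1 : ‖b - b'‖ < ε/4 := by rwa [← dist_eq_norm]
  have hb2 : ‖b' - b‖ < ε/4 := by rwa [← dist_eq_norm, dist_comm]
  have h2 : ‖e n * b' - b'‖ < ε/4 := by
    have := hN n hn
    rwa [Real.dist_eq, sub_zero, abs_of_nonneg (norm_nonneg _)] at this
  have h1 : ‖e n * (b - b')‖ ≤ ‖b - b'‖ := by
    calc ‖e n * (b - b')‖ ≤ ‖e n‖ * ‖b - b'‖ := norm_mul_le _ _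
      _ ≤ 1 * ‖b - b'‖ := by gcongr; exact he1 n
      _ = ‖b - b'‖ := one_mul _
  rw [Real.dist_eq, sub_zero, abs_of_nonneg (norm_nonneg _), key]
  calc ‖e n * (b - b') + (e n * b' - b') + (b' - b)‖
      ≤ ‖e n * (b - b')‖ + ‖e n * b' - b'‖ + ‖b' - b‖ := norm_add₃_le
    _ < ε := by linarith

lemma auxR {B : Type*} [NonUnitalNormedRing B] (e : ℕ → B) (he1 : ∀ n, ‖e n‖ ≤ 1)
    (S : Set B) (h : ∀ b ∈ S, Tendsto (fun n => ‖b * e n - b‖) atTop (nhds 0)) :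
    ∀ b ∈ closure S, Tendsto (fun n => ‖b * e n - b‖) atTop (nhds 0) := by
  intro b hb
  rw [Metric.tendsto_atTop]
  intro ε hε
  obtain ⟨b', hb'S, hbb'⟩ := Metric.mem_closure_iff.mp hb (ε/4) (by linarith)
  obtain ⟨N, hN⟩ := Metric.tendsto_atTop.mp (h b' hb'S) (ε/4) (by linarith)
  refine ⟨N, fun n hn => ?_⟩
  have key : b * e n - b = (b - b') * e n + (b' * e n - b') + (b' - b) := by
    rw [sub_mul]; abel
  have hb1 : ‖b - b'‖ < ε/4 := by rwa [← dist_eq_norm]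
  have hb2 : ‖b' - b‖ < ε/4 := by rwa [← dist_eq_norm, dist_comm]
  have h2 : ‖b' * e n - b'‖ < ε/4 := by
    have := hN n hn
    rwa [Real.dist_eq, sub_zero, abs_of_nonneg (norm_nonneg _)] at this
  have h1 : ‖(b - b') * e n‖ ≤ ‖b - b'‖ := by
    calc ‖(b - b') * e n‖ ≤ ‖b - b'‖ * ‖e n‖ := norm_mul_le _ _
      _ ≤ ‖b - b'‖ * 1 := by gcongr; exact he1 n
      _ = ‖b - b'‖ := mul_one _
  rw [Real.dist_eq, sub_zero, abs_of_nonneg (norm_nonneg _), key]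
  calc ‖(b - b') * e n + (b' * e n - b') + (b' - b)‖
      ≤ ‖(b - b') * e n‖ + ‖b' * e n - b'‖ + ‖b' - b‖ := norm_add₃_le
    _ < ε := by linarith

theorem stmt4' {B : Type*} [NonUnitalCStarAlgebra B]
    (A : NonUnitalStarSubalgebra ℂ B)
    (a : B) (haA : a ∈ A)
    (e : ℕ → B) (he1 : ∀ n, ‖e n‖ ≤ 1)
    (happ : ∀ x ∈ A,
      Filter.Tendsto (fun n => ‖e n * x - x‖) Filter.atTop (nhds 0) ∧
      Filter.Tendsto (fun n => ‖x * e n - x‖) Filter.atTop (nhds 0)) :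
    ∀ b ∈ closure {y : B | ∃ x : B, y = a * x * a},
      Filter.Tendsto (fun n => ‖e n * b - b‖) Filter.atTop (nhds 0) ∧
      Filter.Tendsto (fun n => ‖b * e n - b‖) Filter.atTop (nhds 0) := by
  intro b hb
  obtain ⟨hL, hR⟩ := happ a haA
  constructor
  · refine auxL e he1 _ ?_ b hb
    rintro c ⟨x, rfl⟩
    have key : ∀ n, e n * (a * x * a) - a * x * a = (e n * a - a) * (x * a) := by
      intro n; noncomm_ring
    refine squeeze_zero (fun n => norm_nonneg _) (fun n => ?_)
      (g := fun n => ‖e n * a - a‖ * ‖x * a‖) ?_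
    · rw [key n]; exact norm_mul_le _ _
    · simpa using hL.mul_const ‖x * a‖
  · refine auxR e he1 _ ?_ b hb
    rintro c ⟨x, rfl⟩
    have key : ∀ n, (a * x * a) * e n - a * x * a = (a * x) * (a * e n - a) := by
      intro n; noncomm_ring
    refine squeeze_zero (fun n => norm_nonneg _) (fun n => ?_)
      (g := fun n => ‖a * x‖ * ‖a * e n - a‖) ?_
    · rw [key n]; exact norm_mul_le _ _
    · simpa using hR.const_mul ‖a * x‖

/-- an approximate identity of a C*-subalgebra `A ⊆ B` acts as an approximate
identity on the hereditary subalgebra `cl(a B a)` of `B` generated by a positive `a ∈ A`. -/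
theorem stmt4 {B : Type*} [NonUnitalCStarAlgebra B] [PartialOrder B] [StarOrderedRing B]
    (A : NonUnitalStarSubalgebra ℂ B) (hA : IsClosed (A : Set B))
    (a : B) (haA : a ∈ A) (ha : 0 ≤ a)
    (e : ℕ → B) (heA : ∀ n, e n ∈ A) (he0 : ∀ n, 0 ≤ e n) (he1 : ∀ n, ‖e n‖ ≤ 1)
    (happ : ∀ x ∈ A,
      Filter.Tendsto (fun n => ‖e n * x - x‖) Filter.atTop (nhds 0) ∧
      Filter.Tendsto (fun n => ‖x * e n - x‖) Filter.atTop (nhds 0)) :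
    ∀ b ∈ closure {y : B | ∃ x : B, y = a * x * a},
      Filter.Tendsto (fun n => ‖e n * b - b‖) Filter.atTop (nhds 0) ∧
      Filter.Tendsto (fun n => ‖b * e n - b‖) Filter.atTop (nhds 0) := by
  exact stmt4' A a haA e he1 happ
end

section
/- Let B be a unital C*-algebra with a positive element a satisfying 0 ≤ a ≤ 1, elements b ∈ B with 0 ≤ b ≤ 1 and ab = a, where a is full. If B has property (P1), then there exists x ∈ B with ‖x‖ ≤ 1 such that x*·b·x = 1. -/
open scoped ENNReal MultiplierAlgebra

/-- if `B` has (P1), `0 ≤ a, b ≤ 1`, `a * b = a` and `a` is full, then there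
is a contraction `x` with `star x * b * x = 1`. -/
theorem stmt7 {B : Type*} [CStarAlgebra B] [PartialOrder B] [StarOrderedRing B]
    (hP1 : PropP1 B)
    (a b : B) (ha0 : 0 ≤ a) (ha1 : a ≤ 1) (hb0 : 0 ≤ b) (hb1 : b ≤ 1)
    (hab : a * b = a) (hafull : IsFullIn a) :
    ∃ x : B, ‖x‖ ≤ 1 ∧ star x * b * x = 1 := by
  by_cases htriv : (1 : B) = 0
  · have : Subsingleton B := subsingleton_of_zero_eq_one htriv.symm
    exact ⟨0, by simp, Subsingleton.elim _ _⟩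
  haveI : Nontrivial B := ⟨⟨1, 0, htriv⟩⟩
  obtain ⟨u, v, huv⟩ := hP1 a hafull
  have hasa : IsSelfAdjoint a := .of_nonneg ha0
  have hbsa : IsSelfAdjoint b := .of_nonneg hb0
  have hba : b * a = a := by
    have := congrArg star hab
    rwa [star_mul, hasa.star_eq, hbsa.star_eq] at this
  set w : B := a * v with hw
  set d : B := star w * w with hd
  have hd0 : 0 ≤ d := star_mul_self_nonneg w
  have hone : (1 : B) = star w * (star u * u) * w := by
    have h1 : u * w = 1 := by rw [hw, ← mul_assoc, huv]
    calc (1 : B) = star (u * w) * (u * w) := by rw [h1]; simp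
      _ = star w * (star u * u) * w := by rw [star_mul]; noncomm_ring
  have h1 : (1 : B) ≤ ‖u‖ ^ 2 • d := by
    calc (1 : B) = star w * (star u * u) * w := hone
      _ ≤ star w * algebraMap ℝ B (‖u‖ ^ 2) * w :=
          star_left_conjugate_le_conjugate CStarAlgebra.star_mul_le_algebraMap_norm_sq w
      _ = ‖u‖ ^ 2 • d := by
          simp [Algebra.algebraMap_eq_smul_one, mul_smul_comm, smul_mul_assoc, hd]
  have hune : ‖u‖ ≠ 0 := by
    intro h
    rw [norm_eq_zero] at h
    simp [h] at huv
  have hrpos : (0 : ℝ) < ‖u‖ ^ 2 := by positivity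
  have hεd : (‖u‖ ^ 2)⁻¹ • (1 : B) ≤ d := by
    have := smul_le_smul_of_nonneg_left h1 (inv_nonneg.mpr hrpos.le)
    rwa [smul_smul, inv_mul_cancel₀ hrpos.ne', one_smul] at this
  have hεu : IsUnit ((‖u‖ ^ 2)⁻¹ • (1 : B)) := by
    refine ⟨⟨(‖u‖ ^ 2)⁻¹ • 1, ‖u‖ ^ 2 • 1, ?_, ?_⟩, rfl⟩ <;>
      simp [smul_smul, inv_mul_cancel₀ hrpos.ne', mul_inv_cancel₀ hrpos.ne']
  have hε0 : (0 : B) ≤ (‖u‖ ^ 2)⁻¹ • (1 : B) :=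
    smul_nonneg (inv_nonneg.mpr hrpos.le) zero_le_one
  have hdu : IsUnit d := CStarAlgebra.isUnit_of_le _ hεd ⟨hε0, hεu⟩
  obtain ⟨D, hDd⟩ := hdu
  have hs0 : 0 ≤ CFC.sqrt d := CFC.sqrt_nonneg d
  have hssa : IsSelfAdjoint (CFC.sqrt d) := .of_nonneg hs0
  generalize hs' : CFC.sqrt d = s at hs0 hssa
  have hss : s * s = d := by rw [← hs']; exact CFC.sqrt_mul_sqrt_self d hd0
  have hsd : s * d = d * s := by rw [← hss]; noncomm_ring
  have hDs : (↑D⁻¹ : B) * s = s * ↑D⁻¹ := by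
    calc (↑D⁻¹ : B) * s = ↑D⁻¹ * s * (↑D * ↑D⁻¹) := by
          rw [Units.mul_inv, mul_one]
      _ = ↑D⁻¹ * (s * d) * ↑D⁻¹ := by rw [hDd]; noncomm_ring
      _ = ↑D⁻¹ * (d * s) * ↑D⁻¹ := by rw [hsd]
      _ = (↑D⁻¹ * ↑D) * (s * ↑D⁻¹) := by rw [hDd]; noncomm_ring
      _ = s * ↑D⁻¹ := by rw [Units.inv_mul, one_mul]
  have hst : s * (s * ↑D⁻¹) = 1 := by
    rw [← mul_assoc, hss, ← hDd, Units.mul_inv]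
  have htss : star (s * (↑D⁻¹ : B)) * s = 1 := by
    rw [star_mul, hssa.star_eq, mul_assoc, hss]
    have hdsa : IsSelfAdjoint d := .of_nonneg hd0
    have hDsa : star (↑D : B) = ↑D := by rw [hDd]; exact hdsa.star_eq
    calc star (↑D⁻¹ : B) * d = star (↑D⁻¹ : B) * star (↑D : B) := by
          rw [← hDd, hDsa]
      _ = star ((↑D : B) * ↑D⁻¹) := by rw [star_mul]
      _ = 1 := by rw [Units.mul_inv, star_one]
  set x : B := w * (s * ↑D⁻¹) with hx
  have hx1 : star x * x = 1 := by
    calc star x * x = star (s * (↑D⁻¹ : B)) * (star w * w) * (s * ↑D⁻¹) := by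
          rw [hx, star_mul]; noncomm_ring
      _ = star (s * (↑D⁻¹ : B)) * (s * s) * (s * ↑D⁻¹) := by rw [hss, ← hd]
      _ = (star (s * (↑D⁻¹ : B)) * s) * (s * (s * ↑D⁻¹)) := by noncomm_ring
      _ = 1 := by rw [htss, hst, one_mul]
  have hbw : b * x = x := by
    have h2 : b * x = b * a * (v * (s * ↑D⁻¹)) := by rw [hx, hw]; noncomm_ring
    rw [h2, hba, hx, hw]; noncomm_ring
  refine ⟨x, ?_, ?_⟩
  · have hn : ‖x‖ * ‖x‖ = 1 := by
      rw [← CStarRing.norm_star_mul_self, hx1, norm_one]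
    nlinarith [norm_nonneg x]
  · rw [mul_assoc, hbw, hx1]
end

section
/- Let A be a unital C*-algebra, B = A ⊗ K, and let a ∈ M(B) (the multiplier algebra) such that π(a) is full in the corona algebra M(B)/B, where π : M(B) → M(B)/B is the quotient map. Then a is full in M(B). -/
open scoped ENNReal MultiplierAlgebra

/-- A self-adjoint idempotent in a C*-algebra has norm at most 1. -/
lemma norm_le_one_of_proj {M : Type*} [NonUnitalNormedRing M] [StarRing M] [CStarRing M]
    (P : M) (hs : star P = P) (hi : P * P = P) : ‖P‖ ≤ 1 := by
  by_contra h
  push_neg at h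
  have h1 : ‖star P * P‖ = ‖P‖ * ‖P‖ := CStarRing.norm_star_mul_self
  rw [hs, hi] at h1
  nlinarith [norm_nonneg P]

/-- `B = A ⊗ K` is modelled by a system of matrix units `e i j` whose
diagonal partial sums form an approximate identity of `B`; the corona `M(B)/B` is
modelled by a surjective star homomorphism `π` on the multiplier algebra `𝓜(ℂ, B)` whose
kernel is (the image of) `B`.  If `π a` is full in the corona, then `a` is full in
`𝓜(ℂ, B)`. -/
theorem stmt16 {B : Type*} [NonUnitalCStarAlgebra B] {Q : Type*} [CStarAlgebra Q]
    (e : ℕ → ℕ → B)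
    (he_star : ∀ i j, star (e i j) = e j i)
    (he_mul : ∀ i j k l, e i j * e k l = if j = k then e i l else 0)
    (he_ne : ∀ i, e i i ≠ 0)
    (happrox : ∀ b : B,
      Filter.Tendsto (fun n => ‖(∑ i ∈ Finset.range n, e i i) * b - b‖)
        Filter.atTop (nhds 0) ∧
      Filter.Tendsto (fun n => ‖b * (∑ i ∈ Finset.range n, e i i) - b‖)
        Filter.atTop (nhds 0))
    (π : 𝓜(ℂ, B) →⋆ₐ[ℂ] Q) (hsurj : Function.Surjective π)
    (hker : ∀ x : 𝓜(ℂ, B), π x = 0 ↔ ∃ b : B, x = (b : 𝓜(ℂ, B)))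
    (a : 𝓜(ℂ, B)) (hfull : IsFullIn (π a)) :
    IsFullIn a := by
  classical
  set I : TwoSidedIdeal 𝓜(ℂ, B) := TwoSidedIdeal.span {a} with hIdef
  -- It suffices to show `1 ∈ I`.
  suffices hone : (1 : 𝓜(ℂ, B)) ∈ I by
    have huniv : (I : Set 𝓜(ℂ, B)) = Set.univ :=
      Set.eq_univ_of_forall fun x => by simpa using I.mul_mem_left x 1 hone
    unfold IsFullIn
    rw [huniv, closure_univ]
  -- The coercion `B → 𝓜(ℂ, B)` as a star homomorphism.
  have coe_mul : ∀ x y : B, ((x * y : B) : 𝓜(ℂ, B)) = (x : 𝓜(ℂ, B)) * (y : 𝓜(ℂ, B)) :=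
    fun x y => map_mul (DoubleCentralizer.coeHom (𝕜 := ℂ) (A := B)) x y
  have coe_sub : ∀ x y : B, ((x - y : B) : 𝓜(ℂ, B)) = (x : 𝓜(ℂ, B)) - (y : 𝓜(ℂ, B)) :=
    fun x y => map_sub (DoubleCentralizer.coeHom (𝕜 := ℂ) (A := B)) x y
  have coe_star : ∀ x : B, ((star x : B) : 𝓜(ℂ, B)) = star (x : 𝓜(ℂ, B)) :=
    fun x => map_star (DoubleCentralizer.coeHom (𝕜 := ℂ) (A := B)) x
  have coe_sum : ∀ (n : ℕ) (f : ℕ → B),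
      ((∑ i ∈ Finset.range n, f i : B) : 𝓜(ℂ, B))
        = ∑ i ∈ Finset.range n, ((f i : B) : 𝓜(ℂ, B)) :=
    fun n f => map_sum (DoubleCentralizer.coeHom (𝕜 := ℂ) (A := B)).toAddMonoidHom f _
  have coe_zero : ((0 : B) : 𝓜(ℂ, B)) = 0 :=
    map_zero (DoubleCentralizer.coeHom (𝕜 := ℂ) (A := B))
  -- norm bound for the coercion
  have coe_norm : ∀ x : B, ‖(x : 𝓜(ℂ, B))‖ ≤ ‖x‖ := by
    intro x
    rw [DoubleCentralizer.norm_def, Prod.norm_def]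
    refine max_le (ContinuousLinearMap.opNorm_mul_apply_le ℂ B x) ?_
    refine ContinuousLinearMap.opNorm_le_bound _ (norm_nonneg x) fun y => ?_
    simpa [mul_comm] using norm_mul_le y x
  -- The image of `I` under `π` is a two-sided ideal of `Q`.
  let J : TwoSidedIdeal Q := TwoSidedIdeal.mk' (π '' I)
    ⟨0, I.zero_mem, map_zero π⟩
    (by rintro _ _ ⟨x, hx, rfl⟩ ⟨y, hy, rfl⟩; exact ⟨x + y, I.add_mem hx hy, map_add π x y⟩)
    (by rintro _ ⟨x, hx, rfl⟩; exact ⟨-x, I.neg_mem hx, map_neg π x⟩)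
    (by rintro x _ ⟨y, hy, rfl⟩
        obtain ⟨x', rfl⟩ := hsurj x
        exact ⟨x' * y, I.mul_mem_left x' y hy, map_mul π x' y⟩)
    (by rintro _ y ⟨x, hx, rfl⟩
        obtain ⟨y', rfl⟩ := hsurj y
        exact ⟨x * y', I.mul_mem_right x y' hx, map_mul π x y'⟩)
  have hJ : ∀ z : Q, z ∈ J ↔ z ∈ π '' I := fun z => TwoSidedIdeal.mem_mk' _ _ _ _ _ _ z
  have hspan_le : ∀ z : Q, z ∈ TwoSidedIdeal.span {π a} → z ∈ J := by
    intro z hz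
    refine TwoSidedIdeal.mem_span_iff.mp hz J ?_
    rintro _ rfl
    exact (hJ _).mpr ⟨a, TwoSidedIdeal.subset_span rfl, rfl⟩
  -- Get `w ∈ I` with `π w` close to 1.
  have h1cl : (1 : Q) ∈ closure ((TwoSidedIdeal.span {π a} : TwoSidedIdeal Q) : Set Q) := by
    rw [hfull]; trivial
  obtain ⟨z, hzmem, hzdist⟩ := Metric.mem_closure_iff.mp h1cl (1 / 2) (by norm_num)
  obtain ⟨w, hwI, hwz⟩ := (hJ z).mp (hspan_le z hzmem)
  -- `z` is invertible.
  have hz1 : ‖(1 : Q) - z‖ < 1 := by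
    rw [← dist_eq_norm]
    linarith
  let v : Qˣ := Units.oneSub ((1 : Q) - z) hz1
  have hv : (v : Q) = z := by
    show (1 : Q) - ((1 : Q) - z) = z
    abel
  obtain ⟨u, hu⟩ := hsurj (↑v⁻¹ : Q)
  -- `w * u ∈ I` and `π (w * u) = 1`, so `w * u = 1 + b` for some `b : B`.
  have hwuI : w * u ∈ I := I.mul_mem_right w u hwI
  have hπwu : π (w * u) = 1 := by
    rw [map_mul, hwz, hu, ← hv, v.mul_inv]
  have hker_wu : π (w * u - 1) = 0 := by
    rw [map_sub, map_one, hπwu, sub_self]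
  obtain ⟨b, hb⟩ := (hker (w * u - 1)).mp hker_wu
  have hwu_eq : w * u = 1 + (b : 𝓜(ℂ, B)) := by
    rw [← hb]; abel
  -- Approximate identity: choose `m` with `‖b * E m - b‖ < 1/2`.
  set E : ℕ → B := fun n => ∑ i ∈ Finset.range n, e i i with hEdef
  obtain ⟨m, hm⟩ := (Filter.Tendsto.eventually_lt_const (by norm_num : (0:ℝ) < 1/2)
    (happrox b).2).exists
  -- `E m` is a self-adjoint idempotent in `B`.
  have hEmul : E m * E m = E m := by
    rw [hEdef]
    simp only [Finset.sum_mul_sum]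
    calc ∑ i ∈ Finset.range m, ∑ j ∈ Finset.range m, e i i * e j j
        = ∑ i ∈ Finset.range m, ∑ j ∈ Finset.range m, (if i = j then e i j else 0) := by
          refine Finset.sum_congr rfl fun i _ => Finset.sum_congr rfl fun j _ => he_mul i i j j
      _ = ∑ i ∈ Finset.range m, e i i := by
          refine Finset.sum_congr rfl fun i hi => ?_
          rw [Finset.sum_ite_eq (Finset.range m) i (fun j => e i j), if_pos hi]
  have hEstar : star (E m) = E m := by
    rw [hEdef]
    simp only [star_sum]
    exact Finset.sum_congr rfl fun i _ => he_star i i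
  -- `P := 1 - E m` (in the multiplier algebra) is a self-adjoint idempotent.
  set P : 𝓜(ℂ, B) := 1 - ((E m : B) : 𝓜(ℂ, B)) with hPdef
  have hPP : P * P = P := by
    rw [hPdef, sub_mul, mul_sub, mul_sub, one_mul, mul_one, ← coe_mul, hEmul]
    abel
  have hPstar : star P = P := by
    rw [hPdef, star_sub, star_one, ← coe_star, hEstar]
  have hPnorm : ‖P‖ ≤ 1 := norm_le_one_of_proj P hPstar hPP
  -- `c := P * b * P` has small norm.
  set c : 𝓜(ℂ, B) := P * (b : 𝓜(ℂ, B)) * P with hcdef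
  have hbP : (b : 𝓜(ℂ, B)) * P = ((b - b * E m : B) : 𝓜(ℂ, B)) := by
    rw [coe_sub, coe_mul, hPdef, mul_sub, mul_one]
  have hcnorm : ‖c‖ < 1 := by
    have h1 : ‖c‖ ≤ ‖P‖ * ‖(b : 𝓜(ℂ, B)) * P‖ := by
      rw [hcdef, mul_assoc]
      exact norm_mul_le _ _
    have h2 : ‖(b : 𝓜(ℂ, B)) * P‖ ≤ ‖b - b * E m‖ := by
      rw [hbP]; exact coe_norm _
    have h3 : ‖b - b * E m‖ < 1 / 2 := by
      rw [norm_sub_rev]; exact hm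
    nlinarith [norm_nonneg ((b : 𝓜(ℂ, B)) * P), norm_nonneg P]
  -- `d := P * (w * u) * P ∈ I` equals `(1 + c) * P`, and `1 + c` is invertible.
  have hdI : P * (w * u) * P ∈ I :=
    I.mul_mem_right _ _ (I.mul_mem_left _ _ hwuI)
  have hd_eq : P * (w * u) * P = (1 + c) * P := by
    rw [hwu_eq, hcdef]
    have hcP : (P * (b : 𝓜(ℂ, B)) * P) * P = P * (b : 𝓜(ℂ, B)) * P := by
      rw [mul_assoc, mul_assoc, hPP, ← mul_assoc]
    calc P * (1 + (b : 𝓜(ℂ, B))) * P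
        = P * P + P * (b : 𝓜(ℂ, B)) * P := by rw [mul_add, mul_one, add_mul]
      _ = P + P * (b : 𝓜(ℂ, B)) * P := by rw [hPP]
      _ = (1 + P * (b : 𝓜(ℂ, B)) * P) * P := by rw [add_mul, one_mul, hcP]
  have hcneg : ‖-c‖ < 1 := by rwa [norm_neg]
  let vc : 𝓜(ℂ, B)ˣ := Units.oneSub (-c) hcneg
  have hvc : (vc : 𝓜(ℂ, B)) = 1 + c := by
    show (1 : 𝓜(ℂ, B)) - (-c) = 1 + c
    abel
  -- Hence `P ∈ I`.
  have hPI : P ∈ I := by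
    have : (↑vc⁻¹ : 𝓜(ℂ, B)) * (P * (w * u) * P) = P := by
      rw [hd_eq, ← hvc, ← mul_assoc, vc.inv_mul, one_mul]
    rw [← this]
    exact I.mul_mem_left _ _ hdI
  -- `e m m ∈ I` since `e m m * E m = 0`.
  have hemmEm : e m m * E m = 0 := by
    rw [hEdef]
    rw [Finset.mul_sum]
    calc ∑ i ∈ Finset.range m, e m m * e i i
        = ∑ i ∈ Finset.range m, (if m = i then e m i else 0) := by
          refine Finset.sum_congr rfl fun i _ => he_mul m m i i
      _ = 0 := by
          rw [Finset.sum_ite_eq (Finset.range m) m (fun i => e m i),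
            if_neg (by simp : m ∉ Finset.range m)]
  have hemmI : ((e m m : B) : 𝓜(ℂ, B)) ∈ I := by
    have : ((e m m : B) : 𝓜(ℂ, B)) * P = ((e m m : B) : 𝓜(ℂ, B)) := by
      rw [hPdef, mul_sub, mul_one, ← coe_mul, hemmEm, coe_zero, sub_zero]
    rw [← this]
    exact I.mul_mem_left _ _ hPI
  -- each `e i i ∈ I`, hence `E m ∈ I`.
  have heiiI : ∀ i, ((e i i : B) : 𝓜(ℂ, B)) ∈ I := by
    intro i
    have h1 : e i m * e m m = e i m := by rw [he_mul, if_pos rfl]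
    have h2 : e i m * e m i = e i i := by rw [he_mul, if_pos rfl]
    have : ((e i m : B) : 𝓜(ℂ, B)) * ((e m m : B) : 𝓜(ℂ, B)) * ((e m i : B) : 𝓜(ℂ, B))
        = ((e i i : B) : 𝓜(ℂ, B)) := by
      rw [← coe_mul, ← coe_mul, h1, h2]
    rw [← this]
    exact I.mul_mem_right _ _ (I.mul_mem_left _ _ hemmI)
  have hEmI : ((E m : B) : 𝓜(ℂ, B)) ∈ I := by
    rw [hEdef, coe_sum]
    exact sum_mem fun i _ => heiiI i
  -- Conclude `1 = P + E m ∈ I`.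
  have : P + ((E m : B) : 𝓜(ℂ, B)) = 1 := by rw [hPdef]; abel
  rw [← this]
  exact I.add_mem hPI hEmI
end
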